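/- A permutation π is separable if and only if its interval poset is binary, i.e., every element of P(π) covers at most two elements. -/

import Mathlib

/-- A set of values in `Fin n` is consecutive if it is closed under betweenness. -/
def Consec {n : ℕ} (S : Finset (Fin n)) : Prop :=
  ∀ ⦃x y z : Fin n⦄, x ∈ S → z ∈ S → x ≤ y → y ≤ z → y ∈ S

/-- `I` is an interval of the permutation `π` if both `I` and its preimage under `π`
are sets of consecutive integers. -/
def IsInterval {n : ℕ} (π : Equiv.Perm (Fin n)) (I : Finset (Fin n)) : Prop :=
  Consec I ∧ Consec (I.image π.symm)

/-- The 1-based integer interval `[a,b]` viewed inside `Fin n`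
(the element `x : Fin n` represents the value `x.val + 1`). -/
def ivl (n a b : ℕ) : Finset (Fin n) :=
  Finset.univ.filter (fun x => a ≤ x.val + 1 ∧ x.val + 1 ≤ b)

/-- J is covered by I in the interval poset of π. -/
def IntervalCover {n : ℕ} (π : Equiv.Perm (Fin n)) (I J : Finset (Fin n)) : Prop :=
  J ⊂ I ∧ ¬ ∃ K : Finset (Fin n), IsInterval π K ∧ K.Nonempty ∧ J ⊂ K ∧ K ⊂ I

/-- The Hasse diagram of the interval poset of π, as an undirected simple graph on the
nonempty intervals of π, with an edge for each covering relation. -/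
def HasseGraph (n : ℕ) (π : Equiv.Perm (Fin n)) :
    SimpleGraph {I : Finset (Fin n) // IsInterval π I ∧ I.Nonempty} where
  Adj x y := IntervalCover π x.1 y.1 ∨ IntervalCover π y.1 x.1
  symm := ⟨fun _ _ h => h.symm⟩
  loopless := ⟨fun x h => by
    rcases h with h | h <;> exact absurd h.1 (ssubset_irrefl _)⟩

/-- π contains the pattern 2413. -/
def Contains2413 {n : ℕ} (π : Equiv.Perm (Fin n)) : Prop :=
  ∃ i₁ i₂ i₃ i₄ : Fin n, i₁ < i₂ ∧ i₂ < i₃ ∧ i₃ < i₄ ∧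
    π i₃ < π i₁ ∧ π i₁ < π i₄ ∧ π i₄ < π i₂

/-- π contains the pattern 3142. -/
def Contains3142 {n : ℕ} (π : Equiv.Perm (Fin n)) : Prop :=
  ∃ i₁ i₂ i₃ i₄ : Fin n, i₁ < i₂ ∧ i₂ < i₃ ∧ i₃ < i₄ ∧
    π i₂ < π i₄ ∧ π i₄ < π i₁ ∧ π i₁ < π i₃


lemma consec_union {n : ℕ} {A B : Finset (Fin n)} (hA : Consec A) (hB : Consec B)
    (h : ∃ w, w ∈ A ∧ w ∈ B) : Consec (A ∪ B) := by
  obtain ⟨w, hwA, hwB⟩ := h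
  intro x y z hx hz hxy hyz
  simp only [Finset.mem_union] at hx hz ⊢
  rcases hx with hx | hx <;> rcases hz with hz | hz
  · exact Or.inl (hA hx hz hxy hyz)
  · rcases le_total y w with h1 | h1
    · exact Or.inl (hA hx hwA hxy h1)
    · exact Or.inr (hB hwB hz h1 hyz)
  · rcases le_total y w with h1 | h1
    · exact Or.inr (hB hx hwB hxy h1)
    · exact Or.inl (hA hwA hz h1 hyz)
  · exact Or.inr (hB hx hz hxy hyz)

lemma isInterval_union {n : ℕ} {π : Equiv.Perm (Fin n)} {A B : Finset (Fin n)}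
    (hA : IsInterval π A) (hB : IsInterval π B) (h : ∃ w, w ∈ A ∧ w ∈ B) :
    IsInterval π (A ∪ B) := by
  obtain ⟨w, hwA, hwB⟩ := h
  constructor
  · exact consec_union hA.1 hB.1 ⟨w, hwA, hwB⟩
  · rw [Finset.image_union]
    exact consec_union hA.2 hB.2
      ⟨π.symm w, Finset.mem_image_of_mem _ hwA, Finset.mem_image_of_mem _ hwB⟩

lemma isInterval_singleton {n : ℕ} (π : Equiv.Perm (Fin n)) (v : Fin n) :
    IsInterval π {v} := by
  constructor
  · intro x y z hx hz hxy hyz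
    simp only [Finset.mem_singleton] at *
    subst hx; subst hz; exact le_antisymm hyz hxy
  · rw [Finset.image_singleton]
    intro x y z hx hz hxy hyz
    simp only [Finset.mem_singleton] at *
    subst hx; subst hz; exact le_antisymm hyz hxy

-- test names
example (s : Finset ℕ) (f : ℕ → ℕ) (h : s.Nonempty) : ∃ b ∈ s, ∀ b' ∈ s, f b' ≤ f b :=
  s.exists_max_image f h

example {n : ℕ} (s : Finset (Fin n)) (k : ℕ) (h : s.card = k) : Fin k ≃o s :=
  s.orderIsoOfFin h


def SumSplit {m : ℕ} (σ : Equiv.Perm (Fin m)) (k : ℕ) : Prop :=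
  ∀ i : Fin m, i.val < k ↔ (σ i).val < k

def SkewSplit {m : ℕ} (σ : Equiv.Perm (Fin m)) (k : ℕ) : Prop :=
  ∀ i : Fin m, i.val < k ↔ m - k ≤ (σ i).val

def pcompl {m : ℕ} (σ : Equiv.Perm (Fin m)) : Equiv.Perm (Fin m) :=
  σ.trans Fin.revPerm

lemma pcompl_apply {m : ℕ} (σ : Equiv.Perm (Fin m)) (i : Fin m) :
    pcompl σ i = (σ i).rev := rfl

lemma compl_3142 {m : ℕ} {σ : Equiv.Perm (Fin m)} (h : Contains3142 (pcompl σ)) :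
    Contains2413 σ := by
  obtain ⟨a, b, c, d, h1, h2, h3, h4, h5, h6⟩ := h
  simp only [pcompl_apply, Fin.rev_lt_rev] at h4 h5 h6
  exact ⟨a, b, c, d, h1, h2, h3, h6, h5, h4⟩

lemma compl_2413 {m : ℕ} {σ : Equiv.Perm (Fin m)} (h : Contains2413 (pcompl σ)) :
    Contains3142 σ := by
  obtain ⟨a, b, c, d, h1, h2, h3, h4, h5, h6⟩ := h
  simp only [pcompl_apply, Fin.rev_lt_rev] at h4 h5 h6
  exact ⟨a, b, c, d, h1, h2, h3, h6, h5, h4⟩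

lemma compl_sum {m : ℕ} {σ : Equiv.Perm (Fin m)} {k : ℕ} (h : SumSplit (pcompl σ) k) :
    SkewSplit σ k := by
  intro i
  have h' := h i
  simp only [pcompl_apply, Fin.val_rev] at h'
  have := (σ i).isLt
  omega

lemma compl_skew {m : ℕ} {σ : Equiv.Perm (Fin m)} {k : ℕ} (h : SkewSplit (pcompl σ) k) :
    SumSplit σ k := by
  intro i
  have h' := h i
  simp only [pcompl_apply, Fin.val_rev] at h'
  have := (σ i).isLt
  omega

lemma skew_to_sum {m : ℕ} {σ : Equiv.Perm (Fin m)} {k : ℕ} (h : SkewSplit σ k) :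
    SumSplit (pcompl σ) k := by
  intro i
  have h' := h i
  simp only [pcompl_apply, Fin.val_rev]
  have := (σ i).isLt
  omega

/-- collapse a value after deleting value `s`. -/
def collapse (s v : ℕ) : ℕ := if v < s then v else v - 1

lemma collapse_lt_collapse {s v w : ℕ} (hv : v ≠ s) (hw : w ≠ s)
    (h : collapse s v < collapse s w) : v < w := by
  unfold collapse at h; split_ifs at h <;> omega

noncomputable def delLast {M : ℕ} (σ : Equiv.Perm (Fin (M+1))) : Equiv.Perm (Fin M) :=
  Equiv.ofBijective
    (fun j => ⟨collapse (σ (Fin.last M)).val (σ j.castSucc).val, by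
      have hne : σ j.castSucc ≠ σ (Fin.last M) :=
        fun h => (Fin.ne_last_of_lt (Fin.castSucc_lt_last j)) (σ.injective h)
      have hne' : (σ j.castSucc).val ≠ (σ (Fin.last M)).val :=
        fun h => hne (Fin.ext h)
      have h1 := (σ j.castSucc).isLt
      have h2 := (σ (Fin.last M)).isLt
      unfold collapse; split_ifs <;> omega⟩)
    (Finite.injective_iff_bijective.mp (by
      intro j1 j2 h
      have hval : collapse (σ (Fin.last M)).val (σ j1.castSucc).val =
          collapse (σ (Fin.last M)).val (σ j2.castSucc).val := congrArg Fin.val h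
      have hne1 : (σ j1.castSucc).val ≠ (σ (Fin.last M)).val := fun hh =>
        (Fin.ne_last_of_lt (Fin.castSucc_lt_last j1)) (σ.injective (Fin.ext hh))
      have hne2 : (σ j2.castSucc).val ≠ (σ (Fin.last M)).val := fun hh =>
        (Fin.ne_last_of_lt (Fin.castSucc_lt_last j2)) (σ.injective (Fin.ext hh))
      have : (σ j1.castSucc).val = (σ j2.castSucc).val := by
        unfold collapse at hval; split_ifs at hval <;> omega
      have : σ j1.castSucc = σ j2.castSucc := Fin.ext this
      have := σ.injective this
      exact Fin.castSucc_injective M this))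

lemma delLast_val {M : ℕ} (σ : Equiv.Perm (Fin (M+1))) (j : Fin M) :
    ((delLast σ) j).val = collapse (σ (Fin.last M)).val (σ j.castSucc).val := rfl

lemma val_ne_s {M : ℕ} (σ : Equiv.Perm (Fin (M+1))) (j : Fin M) :
    (σ j.castSucc).val ≠ (σ (Fin.last M)).val := fun h =>
  (Fin.ne_last_of_lt (Fin.castSucc_lt_last j)) (σ.injective (Fin.ext h))

lemma delLast_avoid2413 {M : ℕ} {σ : Equiv.Perm (Fin (M+1))} (h : ¬Contains2413 σ) :
    ¬Contains2413 (delLast σ) := by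
  intro ⟨a, b, c, d, h1, h2, h3, h4, h5, h6⟩
  refine h ⟨a.castSucc, b.castSucc, c.castSucc, d.castSucc,
    Fin.castSucc_lt_castSucc_iff.mpr h1, Fin.castSucc_lt_castSucc_iff.mpr h2,
    Fin.castSucc_lt_castSucc_iff.mpr h3, ?_, ?_, ?_⟩ <;>
  · rw [Fin.lt_def]
    exact collapse_lt_collapse (val_ne_s σ _) (val_ne_s σ _) (by assumption)

lemma delLast_avoid3142 {M : ℕ} {σ : Equiv.Perm (Fin (M+1))} (h : ¬Contains3142 σ) :
    ¬Contains3142 (delLast σ) := by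
  intro ⟨a, b, c, d, h1, h2, h3, h4, h5, h6⟩
  refine h ⟨a.castSucc, b.castSucc, c.castSucc, d.castSucc,
    Fin.castSucc_lt_castSucc_iff.mpr h1, Fin.castSucc_lt_castSucc_iff.mpr h2,
    Fin.castSucc_lt_castSucc_iff.mpr h3, ?_, ?_, ?_⟩ <;>
  · rw [Fin.lt_def]
    exact collapse_lt_collapse (val_ne_s σ _) (val_ne_s σ _) (by assumption)


lemma hne_s' {M : ℕ} (σ : Equiv.Perm (Fin (M+1))) (i : Fin (M+1)) (hi : i ≠ Fin.last M) :
    (σ i).val ≠ (σ (Fin.last M)).val := fun h => hi (σ.injective (Fin.ext h))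

lemma step1 {M : ℕ} (hM : 2 ≤ M) (σ : Equiv.Perm (Fin (M+1)))
    (hav : ¬Contains3142 σ)
    (k' : ℕ) (hk'1 : 1 ≤ k') (hk'2 : k' < M) (hsp : SumSplit (delLast σ) k') :
    ∃ k, 1 ≤ k ∧ k < M + 1 ∧ (SumSplit σ k ∨ SkewSplit σ k) := by
  classical
  obtain ⟨s, hs_def⟩ : ∃ s, (σ (Fin.last M)).val = s := ⟨_, rfl⟩
  have hsM : s < M + 1 := hs_def ▸ (σ (Fin.last M)).isLt
  have hPex : ∃ k, 1 ≤ k ∧ k < M ∧ SumSplit (delLast σ) k := ⟨k', hk'1, hk'2, hsp⟩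
  set k0 := Nat.find hPex with hk0_def
  obtain ⟨hk01, hk0M, hsum⟩ := Nat.find_spec hPex
  have hk0min : ∀ j, j < k0 → ¬(1 ≤ j ∧ j < M ∧ SumSplit (delLast σ) j) :=
    fun j hj => Nat.find_min hPex hj
  have hne_s : ∀ i : Fin (M+1), i ≠ Fin.last M → (σ i).val ≠ s :=
    fun i hi => hs_def ▸ hne_s' σ i hi
  have key : ∀ i : Fin (M+1), i ≠ Fin.last M →
      (i.val < k0 ↔ collapse s (σ i).val < k0) := by
    intro i hi
    have h := hsum (i.castPred hi)
    rw [delLast_val, Fin.castSucc_castPred, hs_def] at h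
    simpa only [Fin.coe_castPred] using h
  rcases Nat.lt_or_ge s k0 with hcase | hcase
  · -- s < k0
    rcases Nat.eq_zero_or_pos s with hs0 | hs1
    · -- s = 0 : SkewSplit σ M
      refine ⟨M, by omega, by omega, Or.inr ?_⟩
      intro i
      have hb := (σ i).isLt
      by_cases hi : i = Fin.last M
      · subst hi
        rw [Fin.val_last]
        omega
      · have hne := hne_s i hi
        have hiv : i.val ≠ M := fun h => hi (Fin.ext (by rw [Fin.val_last]; exact h))
        have := i.isLt
        omega
    · -- 1 ≤ s < k0 : build 3142
      exfalso
      set A : Finset (Fin (M+1)) := Finset.univ.filter (fun i => (σ i).val < s) with hA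
      set B : Finset (Fin (M+1)) := Finset.univ.filter (fun i => i.val < s) with hB
      have hcardB : B.card = s := by
        have himg : B.image Fin.val = Finset.range s := by
          ext a
          simp only [hB, Finset.mem_image, Finset.mem_filter, Finset.mem_univ, true_and,
            Finset.mem_range]
          constructor
          · rintro ⟨i, hi, rfl⟩; exact hi
          · intro ha; exact ⟨⟨a, by omega⟩, ha, rfl⟩
        have := congrArg Finset.card himg
        rwa [Finset.card_image_of_injective _ Fin.val_injective, Finset.card_range] at this
      have hcardA : A.card = s := by
        have himg : A = B.image ⇑σ.symm := by
          ext i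
          simp only [hA, hB, Finset.mem_image, Finset.mem_filter, Finset.mem_univ, true_and]
          constructor
          · intro h; exact ⟨σ i, h, by simp⟩
          · rintro ⟨v, hv, rfl⟩; simpa using hv
        rw [himg, Finset.card_image_of_injective _ σ.symm.injective, hcardB]
      have hApos : ∀ i, (σ i).val < s → i.val < k0 := by
        intro i hi
        have hine : i ≠ Fin.last M := by
          intro h; rw [h, hs_def] at hi; omega
        refine (key i hine).mpr ?_
        unfold collapse; split_ifs <;> omega
      have hstr : ∃ p q : Fin (M+1), p < q ∧ q.val < k0 ∧ (σ q).val < s ∧ s < (σ p).val := by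
        by_contra hno
        push_neg at hno
        have hAB : A ⊆ B := by
          intro i hiA
          have hilt : (σ i).val < s := by
            simpa only [hA, Finset.mem_filter, Finset.mem_univ, true_and] using hiA
          simp only [hB, Finset.mem_filter, Finset.mem_univ, true_and]
          by_contra hge
          push_neg at hge
          have hBnotsubA : ¬ B ⊆ A := by
            intro hsub
            have hBA : B = A := Finset.eq_of_subset_of_card_le hsub (by omega)
            have : i ∈ B := hBA ▸ hiA
            simp only [hB, Finset.mem_filter, Finset.mem_univ, true_and] at this
            omega
          obtain ⟨p, hpB, hpA⟩ := Finset.not_subset.mp hBnotsubA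
          have hpv : p.val < s := by
            simpa only [hB, Finset.mem_filter, Finset.mem_univ, true_and] using hpB
          have hpnA : ¬ (σ p).val < s := by
            simpa only [hA, Finset.mem_filter, Finset.mem_univ, true_and] using hpA
          have hpne : p ≠ Fin.last M := by
            intro h; rw [h, Fin.val_last] at hpv; omega
          have hps : (σ p).val ≠ s := hne_s p hpne
          have hiq : i.val < k0 := hApos i hilt
          have hpi : p < i := by rw [Fin.lt_def]; omega
          have := hno p i hpi hiq hilt
          omega
        have hBA : A = B := Finset.eq_of_subset_of_card_le hAB (by omega)
        refine hk0min s hcase ⟨hs1, by omega, ?_⟩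
        intro j
        rw [delLast_val, hs_def]
        have hne := hs_def ▸ hne_s' σ j.castSucc
          (Fin.ne_last_of_lt (Fin.castSucc_lt_last j))
        have hmem : (σ j.castSucc).val < s ↔ j.castSucc.val < s := by
          have h1 : j.castSucc ∈ A ↔ j.castSucc ∈ B := by rw [hBA]
          simpa only [hA, hB, Finset.mem_filter, Finset.mem_univ, true_and] using h1
        have hcs : (j.castSucc).val = j.val := Fin.coe_castSucc j
        unfold collapse; split_ifs <;> omega
      obtain ⟨p, q, hpq, hqk, hqs, hps⟩ := hstr
      have hk0M1 : k0 + 1 < M + 1 := by omega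
      set u : Fin (M+1) := ⟨k0 + 1, hk0M1⟩ with hu
      set r : Fin (M+1) := σ.symm u with hr
      have hru : σ r = u := Equiv.apply_symm_apply σ u
      have hruv : (σ r).val = k0 + 1 := by rw [hru]
      have hrne : r ≠ Fin.last M := by
        intro h
        rw [h, hs_def] at hruv
        omega
      have hrge : k0 ≤ r.val := by
        by_contra hlt
        push_neg at hlt
        have hk := (key r hrne).mp hlt
        rw [hruv] at hk
        unfold collapse at hk; split_ifs at hk <;> omega
      have hqne : q ≠ Fin.last M := by
        intro h; rw [h, Fin.val_last] at hqk; omega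
      have hpk : p.val < k0 := by
        have := Fin.lt_def.mp hpq; omega
      have hpne : p ≠ Fin.last M := by
        intro h; rw [h, Fin.val_last] at hpk; omega
      have hple : (σ p).val ≤ k0 := by
        have hk := (key p hpne).mp hpk
        have hne := hne_s p hpne
        unfold collapse at hk; split_ifs at hk <;> omega
      have hqr : q < r := by rw [Fin.lt_def]; omega
      have hrlast : r < Fin.last M := by
        rw [Fin.lt_def, Fin.val_last]
        have h1 := r.isLt
        have h2 : r.val ≠ M := fun h => hrne (Fin.ext (by rw [Fin.val_last]; exact h))
        omega
      exact hav ⟨p, q, r, Fin.last M, hpq, hqr, hrlast,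
        by rw [Fin.lt_def, hs_def]; omega,
        by rw [Fin.lt_def, hs_def]; omega,
        by rw [Fin.lt_def, hruv]; omega⟩
  · -- k0 ≤ s : SumSplit σ k0
    refine ⟨k0, hk01, by omega, Or.inl ?_⟩
    intro i
    by_cases hi : i = Fin.last M
    · subst hi
      rw [Fin.val_last, hs_def]
      omega
    · have hk := key i hi
      have hne := hne_s i hi
      rw [hk]
      have hb := (σ i).isLt
      unfold collapse; split_ifs <;> omega


lemma delLast_pcompl {M : ℕ} (σ : Equiv.Perm (Fin (M+1))) :
    delLast (pcompl σ) = pcompl (delLast σ) := by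
  apply Equiv.ext
  intro j
  apply Fin.ext
  simp only [delLast_val, pcompl_apply, Fin.val_rev]
  have h1 := (σ j.castSucc).isLt
  have h2 := (σ (Fin.last M)).isLt
  have h3 := val_ne_s σ j
  unfold collapse
  split_ifs <;> omega

theorem abstract_decomp : ∀ m : ℕ, ∀ σ : Equiv.Perm (Fin m), 2 ≤ m →
    ¬Contains2413 σ → ¬Contains3142 σ →
    ∃ k, 1 ≤ k ∧ k < m ∧ (SumSplit σ k ∨ SkewSplit σ k) := by
  intro m
  induction m using Nat.strong_induction_on with
  | _ m IH =>
    intro σ hm h24 h31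
    rcases Nat.lt_or_ge m 3 with hm2 | hm3
    · -- m = 2
      have hm2' : m = 2 := by omega
      subst hm2'
      have hinj := σ.injective
      have e01 : (0 : Fin 2) ≠ 1 := by decide
      have hne : (σ 0).val ≠ (σ 1).val := fun h => e01 (hinj (Fin.ext h))
      have b0 := (σ 0).isLt
      have b1 := (σ 1).isLt
      have hival : ∀ i : Fin 2, i.val = 0 ∨ i.val = 1 := by
        intro i; have := i.isLt; omega
      have happ : ∀ i : Fin 2, i.val = 0 → σ i = σ 0 := by
        intro i h; congr 1; exact Fin.ext (by simpa using h)
      have happ1 : ∀ i : Fin 2, i.val = 1 → σ i = σ 1 := by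
        intro i h; congr 1; exact Fin.ext (by simpa using h)
      refine ⟨1, le_refl 1, by omega, ?_⟩
      by_cases h0 : (σ 0).val = 0
      · left
        intro i
        rcases hival i with hi | hi
        · have hv : (σ i).val = (σ 0).val := by rw [happ i hi]
          omega
        · have hv : (σ i).val = (σ 1).val := by rw [happ1 i hi]
          omega
      · right
        intro i
        rcases hival i with hi | hi
        · have hv : (σ i).val = (σ 0).val := by rw [happ i hi]
          omega
        · have hv : (σ i).val = (σ 1).val := by rw [happ1 i hi]
          omega
    · -- m ≥ 3
      obtain ⟨M, rfl⟩ : ∃ M, m = M + 1 := ⟨m - 1, by omega⟩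
      have hM : 2 ≤ M := by omega
      have h24' := delLast_avoid2413 h24
      have h31' := delLast_avoid3142 h31
      obtain ⟨k', hk1, hk2, hsplit⟩ := IH M (by omega) (delLast σ) (by omega) h24' h31'
      rcases hsplit with hsp | hsp
      · exact step1 hM σ h31 k' hk1 hk2 hsp
      · -- skew split of delLast σ: pass to complement
        have htau31 : ¬Contains3142 (pcompl σ) := fun h => h24 (compl_3142 h)
        have hsp' : SumSplit (delLast (pcompl σ)) k' := by
          rw [delLast_pcompl]; exact skew_to_sum hsp
        obtain ⟨k, h1, h2, hss⟩ := step1 hM (pcompl σ) htau31 k' hk1 hk2 hsp'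
        refine ⟨k, h1, h2, ?_⟩
        rcases hss with hss | hss
        · exact Or.inr (compl_sum hss)
        · exact Or.inl (compl_skew hss)


section Restrict

variable {n : ℕ} (π : Equiv.Perm (Fin n)) (I : Finset (Fin n))

lemma mem_I_of_mem_S {x : Fin n} (hx : x ∈ I.image π.symm) : π x ∈ I := by
  obtain ⟨v, hv, rfl⟩ := Finset.mem_image.mp hx
  simpa using hv

lemma mem_S_of_mem_I {v : Fin n} (hv : v ∈ I) : π.symm v ∈ I.image π.symm :=
  Finset.mem_image_of_mem _ hv

noncomputable def valIso : Fin I.card ≃o {x // x ∈ I} := I.orderIsoOfFin rfl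

noncomputable def posIso : Fin I.card ≃o {x // x ∈ I.image π.symm} :=
  (I.image π.symm).orderIsoOfFin (Finset.card_image_of_injective _ π.symm.injective)

noncomputable def restrictPerm : Equiv.Perm (Fin I.card) where
  toFun j := (valIso I).symm ⟨π (posIso π I j), mem_I_of_mem_S π I (posIso π I j).2⟩
  invFun j := (posIso π I).symm ⟨π.symm (valIso I j), mem_S_of_mem_I π I (valIso I j).2⟩
  left_inv j := by simp
  right_inv j := by simp

lemma restrictPerm_coe (j : Fin I.card) :
    ((valIso I) (restrictPerm π I j) : Fin n) = π ((posIso π I j : Fin n)) := by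
  simp [restrictPerm, valIso]

lemma restrictPerm_symm_coe (i : Fin I.card) :
    ((posIso π I) ((restrictPerm π I).symm i) : Fin n) = π.symm ((valIso I i : Fin n)) := by
  simp [restrictPerm, posIso]

lemma restrict_avoid2413 (h : ¬Contains2413 π) : ¬Contains2413 (restrictPerm π I) := by
  rintro ⟨a, b, c, d, h1, h2, h3, h4, h5, h6⟩
  refine h ⟨(posIso π I a : Fin n), (posIso π I b : Fin n), (posIso π I c : Fin n),
    (posIso π I d : Fin n), ?_, ?_, ?_, ?_, ?_, ?_⟩
  · exact Subtype.coe_lt_coe.mpr ((posIso π I).strictMono h1)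
  · exact Subtype.coe_lt_coe.mpr ((posIso π I).strictMono h2)
  · exact Subtype.coe_lt_coe.mpr ((posIso π I).strictMono h3)
  · rw [← restrictPerm_coe, ← restrictPerm_coe]
    exact Subtype.coe_lt_coe.mpr ((valIso I).strictMono h4)
  · rw [← restrictPerm_coe, ← restrictPerm_coe]
    exact Subtype.coe_lt_coe.mpr ((valIso I).strictMono h5)
  · rw [← restrictPerm_coe, ← restrictPerm_coe]
    exact Subtype.coe_lt_coe.mpr ((valIso I).strictMono h6)

lemma restrict_avoid3142 (h : ¬Contains3142 π) : ¬Contains3142 (restrictPerm π I) := by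
  rintro ⟨a, b, c, d, h1, h2, h3, h4, h5, h6⟩
  refine h ⟨(posIso π I a : Fin n), (posIso π I b : Fin n), (posIso π I c : Fin n),
    (posIso π I d : Fin n), ?_, ?_, ?_, ?_, ?_, ?_⟩
  · exact Subtype.coe_lt_coe.mpr ((posIso π I).strictMono h1)
  · exact Subtype.coe_lt_coe.mpr ((posIso π I).strictMono h2)
  · exact Subtype.coe_lt_coe.mpr ((posIso π I).strictMono h3)
  · rw [← restrictPerm_coe, ← restrictPerm_coe]
    exact Subtype.coe_lt_coe.mpr ((valIso I).strictMono h4)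
  · rw [← restrictPerm_coe, ← restrictPerm_coe]
    exact Subtype.coe_lt_coe.mpr ((valIso I).strictMono h5)
  · rw [← restrictPerm_coe, ← restrictPerm_coe]
    exact Subtype.coe_lt_coe.mpr ((valIso I).strictMono h6)

end Restrict

section Seg

variable {n m : ℕ} {S : Finset (Fin n)} (h : S.card = m)

/-- image of a down-closed index set under the order iso of a consecutive set is consecutive -/
lemma consec_seg (hS : Consec S) (p : Fin m → Prop) [DecidablePred p]
    (hp : ∀ j j' : Fin m, j ≤ j' → p j' → p j) :
    Consec ((Finset.univ.filter p).image (fun j => (S.orderIsoOfFin h j : Fin n))) := by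
  intro x y z hx hz hxy hyz
  simp only [Finset.mem_image, Finset.mem_filter, Finset.mem_univ, true_and] at hx hz ⊢
  obtain ⟨jx, hjx, rfl⟩ := hx
  obtain ⟨jz, hjz, rfl⟩ := hz
  have hyS : y ∈ S := hS (S.orderIsoOfFin h jx).2 (S.orderIsoOfFin h jz).2 hxy hyz
  set jy := (S.orderIsoOfFin h).symm ⟨y, hyS⟩ with hjy
  have hey : (S.orderIsoOfFin h jy : Fin n) = y := by rw [hjy]; simp
  refine ⟨jy, ?_, hey⟩
  have hle : jy ≤ jz := by
    rw [← (S.orderIsoOfFin h).le_iff_le]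
    rw [hjy]; simp
    exact Subtype.mk_le_mk.mpr hyz
  exact hp jy jz hle hjz

lemma consec_seg' (hS : Consec S) (p : Fin m → Prop) [DecidablePred p]
    (hp : ∀ j j' : Fin m, j ≤ j' → p j → p j') :
    Consec ((Finset.univ.filter p).image (fun j => (S.orderIsoOfFin h j : Fin n))) := by
  intro x y z hx hz hxy hyz
  simp only [Finset.mem_image, Finset.mem_filter, Finset.mem_univ, true_and] at hx hz ⊢
  obtain ⟨jx, hjx, rfl⟩ := hx
  obtain ⟨jz, hjz, rfl⟩ := hz
  have hyS : y ∈ S := hS (S.orderIsoOfFin h jx).2 (S.orderIsoOfFin h jz).2 hxy hyz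
  set jy := (S.orderIsoOfFin h).symm ⟨y, hyS⟩ with hjy
  have hey : (S.orderIsoOfFin h jy : Fin n) = y := by rw [hjy]; simp
  refine ⟨jy, ?_, hey⟩
  have hle : jx ≤ jy := by
    rw [← (S.orderIsoOfFin h).le_iff_le]
    rw [hjy]; simp
    exact Subtype.mk_le_mk.mpr hxy
  exact hp jx jy hle hjx

end Seg


section Split

variable {n : ℕ} (π : Equiv.Perm (Fin n)) (I : Finset (Fin n))

lemma image_valIso_univ : (Finset.univ.image fun j => (valIso I j : Fin n)) = I := by
  ext v
  simp only [Finset.mem_image, Finset.mem_univ, true_and]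
  constructor
  · rintro ⟨j, rfl⟩; exact (valIso I j).2
  · intro hv
    exact ⟨(valIso I).symm ⟨v, hv⟩, by simp⟩

lemma valIso_coe_injective : Function.Injective (fun j => (valIso I j : Fin n)) :=
  fun a b hab => (valIso I).injective (Subtype.coe_injective hab)

lemma image_symm_seg (p : Fin I.card → Prop) [DecidablePred p] :
    ((Finset.univ.filter p).image (fun j => (valIso I j : Fin n))).image π.symm
      = (Finset.univ.filter (fun j => p (restrictPerm π I j))).image
          (fun j => (posIso π I j : Fin n)) := by
  ext x
  simp only [Finset.mem_image, Finset.mem_filter, Finset.mem_univ, true_and]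
  constructor
  · rintro ⟨v, ⟨i, hi, rfl⟩, rfl⟩
    refine ⟨(restrictPerm π I).symm i, ?_, ?_⟩
    · rwa [Equiv.apply_symm_apply]
    · have := restrictPerm_coe π I ((restrictPerm π I).symm i)
      rw [Equiv.apply_symm_apply] at this
      rw [this, Equiv.symm_apply_apply]
  · rintro ⟨j, hj, rfl⟩
    refine ⟨(valIso I (restrictPerm π I j) : Fin n), ⟨restrictPerm π I j, hj, rfl⟩, ?_⟩
    rw [restrictPerm_coe, Equiv.symm_apply_apply]

theorem interval_split (hI : IsInterval π I) (h2 : 2 ≤ I.card)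
    (h24 : ¬Contains2413 π) (h31 : ¬Contains3142 π) :
    ∃ A B : Finset (Fin n), IsInterval π A ∧ IsInterval π B ∧ A.Nonempty ∧ B.Nonempty ∧
      Disjoint A B ∧ A ∪ B = I := by
  classical
  set m := I.card with hm
  set σ := restrictPerm π I with hσ
  obtain ⟨k, hk1, hk2, hsplit⟩ := abstract_decomp m σ h2
    (restrict_avoid2413 π I h24) (restrict_avoid3142 π I h31)
  have hcardS : (I.image π.symm).card = m := Finset.card_image_of_injective _ π.symm.injective
  rcases hsplit with hsum | hskew
  · -- Sum split
    refine ⟨(Finset.univ.filter (fun j : Fin m => j.val < k)).image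
        (fun j => (valIso I j : Fin n)),
      (Finset.univ.filter (fun j : Fin m => ¬ j.val < k)).image
        (fun j => (valIso I j : Fin n)), ⟨?_, ?_⟩, ⟨?_, ?_⟩, ?_, ?_, ?_, ?_⟩
    · exact consec_seg rfl hI.1 _ (fun j j' hle hp => by omega)
    · rw [image_symm_seg]
      have heq : (Finset.univ.filter (fun j : Fin m => (σ j).val < k))
          = (Finset.univ.filter (fun j : Fin m => j.val < k)) := by
        apply Finset.filter_congr
        intro j _
        have := hsum j
        constructor <;> (intro; omega)
      rw [heq]
      exact consec_seg hcardS hI.2 _ (fun j j' hle hp => by omega)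
    · exact consec_seg' rfl hI.1 _ (fun j j' hle hp => by omega)
    · rw [image_symm_seg]
      have heq : (Finset.univ.filter (fun j : Fin m => ¬ (σ j).val < k))
          = (Finset.univ.filter (fun j : Fin m => ¬ j.val < k)) := by
        apply Finset.filter_congr
        intro j _
        have := hsum j
        constructor <;> (intro; omega)
      rw [heq]
      exact consec_seg' hcardS hI.2 _ (fun j j' hle hp => by omega)
    · refine ⟨(valIso I ⟨0, by omega⟩ : Fin n), Finset.mem_image_of_mem _ ?_⟩
      simp only [Finset.mem_filter, Finset.mem_univ, true_and]
      show (0:ℕ) < k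
      omega
    · refine ⟨(valIso I ⟨k, by omega⟩ : Fin n), Finset.mem_image_of_mem _ ?_⟩
      simp only [Finset.mem_filter, Finset.mem_univ, true_and]
      show ¬ (k:ℕ) < k
      omega
    · rw [Finset.disjoint_image (valIso_coe_injective I)]
      exact Finset.disjoint_filter_filter_not _ _ _
    · rw [← Finset.image_union, Finset.filter_union_filter_not_eq, image_valIso_univ]
  · -- Skew split
    refine ⟨(Finset.univ.filter (fun j : Fin m => ¬ j.val < m - k)).image
        (fun j => (valIso I j : Fin n)),
      (Finset.univ.filter (fun j : Fin m => j.val < m - k)).image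
        (fun j => (valIso I j : Fin n)), ⟨?_, ?_⟩, ⟨?_, ?_⟩, ?_, ?_, ?_, ?_⟩
    · exact consec_seg' rfl hI.1 _ (fun j j' hle hp => by omega)
    · rw [image_symm_seg]
      have heq : (Finset.univ.filter (fun j : Fin m => ¬ (σ j).val < m - k))
          = (Finset.univ.filter (fun j : Fin m => j.val < k)) := by
        apply Finset.filter_congr
        intro j _
        have := hskew j
        constructor <;> (intro; omega)
      rw [heq]
      exact consec_seg hcardS hI.2 _ (fun j j' hle hp => by omega)
    · exact consec_seg rfl hI.1 _ (fun j j' hle hp => by omega)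
    · rw [image_symm_seg]
      have heq : (Finset.univ.filter (fun j : Fin m => (σ j).val < m - k))
          = (Finset.univ.filter (fun j : Fin m => ¬ j.val < k)) := by
        apply Finset.filter_congr
        intro j _
        have := hskew j
        constructor <;> (intro; omega)
      rw [heq]
      exact consec_seg' hcardS hI.2 _ (fun j j' hle hp => by omega)
    · refine ⟨(valIso I ⟨m - 1, by omega⟩ : Fin n), Finset.mem_image_of_mem _ ?_⟩
      simp only [Finset.mem_filter, Finset.mem_univ, true_and]
      show ¬ (m - 1 < m - k)
      omega
    · refine ⟨(valIso I ⟨0, by omega⟩ : Fin n), Finset.mem_image_of_mem _ ?_⟩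
      simp only [Finset.mem_filter, Finset.mem_univ, true_and]
      show (0:ℕ) < m - k
      omega
    · rw [Finset.disjoint_image (valIso_coe_injective I)]
      exact (Finset.disjoint_filter_filter_not _ _ _).symm
    · rw [← Finset.image_union, Finset.union_comm, Finset.filter_union_filter_not_eq,
        image_valIso_univ]

end Split


section Forward

variable {n : ℕ} {π : Equiv.Perm (Fin n)}

lemma cover_nested {I L1 L2 : Finset (Fin n)} (hL1 : IsInterval π L1) (hL2 : IsInterval π L2)
    (hne1 : L1.Nonempty) (hne2 : L2.Nonempty)
    (hc1 : IntervalCover π I L1) (hc2 : IntervalCover π I L2)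
    (hsub : L1 ⊆ L2 ∨ L2 ⊆ L1) : L1 = L2 := by
  rcases hsub with h | h
  · rcases eq_or_ne L1 L2 with heq | hne
    · exact heq
    · exact absurd ⟨L2, hL2, hne2, Finset.ssubset_iff_subset_ne.mpr ⟨h, hne⟩, hc2.1⟩ hc1.2
  · rcases eq_or_ne L2 L1 with heq | hne
    · exact heq.symm
    · exact absurd ⟨L1, hL1, hne1, Finset.ssubset_iff_subset_ne.mpr ⟨h, hne⟩, hc1.1⟩ hc2.2

lemma subset_of_max_le {C D P Q : Finset (Fin n)} (hQcons : Consec Q)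
    (hord : ∀ c ∈ C, ∀ d ∈ D, c < d) {c0 : Fin n} (hc0C : c0 ∈ C) (hc0Q : c0 ∈ Q)
    (hCQ : C ⊆ Q) (hP : P ⊆ C ∪ D) (hPne : P.Nonempty) (hQne : Q.Nonempty)
    (hmax : P.max' hPne ≤ Q.max' hQne) : P ⊆ Q := by
  intro x hx
  rcases Finset.mem_union.mp (hP hx) with hxC | hxD
  · exact hCQ hxC
  · have h1 : c0 < x := hord c0 hc0C x hxD
    have h2 : x ≤ P.max' hPne := Finset.le_max' _ _ hx
    exact hQcons hc0Q (Finset.max'_mem Q hQne) h1.le (le_trans h2 hmax)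

lemma subset_of_min_le {C D P Q : Finset (Fin n)} (hQcons : Consec Q)
    (hord : ∀ d ∈ D, ∀ c ∈ C, d < c) {c0 : Fin n} (hc0C : c0 ∈ C) (hc0Q : c0 ∈ Q)
    (hCQ : C ⊆ Q) (hP : P ⊆ C ∪ D) (hPne : P.Nonempty) (hQne : Q.Nonempty)
    (hmin : Q.min' hQne ≤ P.min' hPne) : P ⊆ Q := by
  intro x hx
  rcases Finset.mem_union.mp (hP hx) with hxC | hxD
  · exact hCQ hxC
  · have h1 : x < c0 := hord x hxD c0 hc0C
    have h2 : P.min' hPne ≤ x := Finset.min'_le _ _ hx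
    exact hQcons (Finset.min'_mem Q hQne) hc0Q (le_trans hmin h2) h1.le

lemma slot_low {I C D L1 L2 : Finset (Fin n)} (hL1 : IsInterval π L1) (hL2 : IsInterval π L2)
    (hne1 : L1.Nonempty) (hne2 : L2.Nonempty)
    (hc1 : IntervalCover π I L1) (hc2 : IntervalCover π I L2)
    (hord : ∀ c ∈ C, ∀ d ∈ D, c < d) (hCne : C.Nonempty)
    (hC1 : C ⊆ L1) (hC2 : C ⊆ L2) (hCD : I = C ∪ D) : L1 = L2 := by
  obtain ⟨c0, hc0⟩ := hCne
  have hP1 : L1 ⊆ C ∪ D := hCD ▸ hc1.1.subset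
  have hP2 : L2 ⊆ C ∪ D := hCD ▸ hc2.1.subset
  apply cover_nested hL1 hL2 hne1 hne2 hc1 hc2
  rcases le_total (L1.max' hne1) (L2.max' hne2) with h | h
  · exact Or.inl (subset_of_max_le hL2.1 hord hc0 (hC2 hc0) hC2 hP1 hne1 hne2 h)
  · exact Or.inr (subset_of_max_le hL1.1 hord hc0 (hC1 hc0) hC1 hP2 hne2 hne1 h)

lemma slot_high {I C D L1 L2 : Finset (Fin n)} (hL1 : IsInterval π L1) (hL2 : IsInterval π L2)
    (hne1 : L1.Nonempty) (hne2 : L2.Nonempty)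
    (hc1 : IntervalCover π I L1) (hc2 : IntervalCover π I L2)
    (hord : ∀ d ∈ D, ∀ c ∈ C, d < c) (hCne : C.Nonempty)
    (hC1 : C ⊆ L1) (hC2 : C ⊆ L2) (hCD : I = C ∪ D) : L1 = L2 := by
  obtain ⟨c0, hc0⟩ := hCne
  have hP1 : L1 ⊆ C ∪ D := hCD ▸ hc1.1.subset
  have hP2 : L2 ⊆ C ∪ D := hCD ▸ hc2.1.subset
  apply cover_nested hL1 hL2 hne1 hne2 hc1 hc2
  rcases le_total (L1.min' hne1) (L2.min' hne2) with h | h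
  · exact Or.inr (subset_of_min_le hL1.1 hord hc0 (hC1 hc0) hC1 hP2 hne2 hne1 h)
  · exact Or.inl (subset_of_min_le hL2.1 hord hc0 (hC2 hc0) hC2 hP1 hne1 hne2 h)

lemma consec_disjoint_order {A B : Finset (Fin n)} (hA : Consec A) (hB : Consec B)
    (hd : Disjoint A B) {a0 b0 : Fin n} (ha0 : a0 ∈ A) (hb0 : b0 ∈ B) (h : a0 < b0) :
    ∀ a ∈ A, ∀ b ∈ B, a < b := by
  intro a ha b hb
  by_contra hcon
  push_neg at hcon
  have hne : b ≠ a := fun heq => (Finset.disjoint_left.mp hd ha) (heq ▸ hb)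
  have hba : b < a := lt_of_le_of_ne hcon hne
  rcases le_total a0 b with h1 | h1
  · exact (Finset.disjoint_left.mp hd (hA ha0 ha h1 hba.le)) hb
  · exact (Finset.disjoint_left.mp hd ha0) (hB hb hb0 h1 h.le)

theorem forward_direction (h24 : ¬Contains2413 π) (h31 : ¬Contains3142 π) :
    ∀ I : Finset (Fin n), IsInterval π I → I.Nonempty →
      ¬ ∃ J₁ J₂ J₃ : Finset (Fin n), J₁ ≠ J₂ ∧ J₁ ≠ J₃ ∧ J₂ ≠ J₃ ∧
        (IsInterval π J₁ ∧ J₁.Nonempty ∧ IntervalCover π I J₁) ∧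
        (IsInterval π J₂ ∧ J₂.Nonempty ∧ IntervalCover π I J₂) ∧
        (IsInterval π J₃ ∧ J₃.Nonempty ∧ IntervalCover π I J₃) := by
  intro I hI hIne
  rintro ⟨J1, J2, J3, h12, h13, h23, ⟨hJ1, hJ1ne, hc1⟩, ⟨hJ2, hJ2ne, hc2⟩, ⟨hJ3, hJ3ne, hc3⟩⟩
  have hIcard : 2 ≤ I.card := by
    have h1 : J1.card < I.card := Finset.card_lt_card hc1.1
    have h2 : 1 ≤ J1.card := Finset.card_pos.mpr hJ1ne
    omega
  obtain ⟨A, B, hAint, hBint, hAne, hBne, hdisj, hunion⟩ :=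
    interval_split π I hI hIcard h24 h31
  -- each child contains A or B
  have hslot : ∀ L, IsInterval π L → L.Nonempty → IntervalCover π I L → (A ⊆ L ∨ B ⊆ L) := by
    intro L hL hLne hcov
    have hLI : L ⊆ I := hcov.1.subset
    have hAI : A ⊆ I := hunion ▸ Finset.subset_union_left
    have hBI : B ⊆ I := hunion ▸ Finset.subset_union_right
    by_cases hLA : ∃ x, x ∈ L ∧ x ∈ A
    · by_cases hAL : A ⊆ L
      · exact Or.inl hAL
      · -- L ∪ A = I, so B ⊆ L
        have hint : IsInterval π (L ∪ A) := isInterval_union hL hAint hLA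
        have hub : L ∪ A ⊆ I := Finset.union_subset hLI hAI
        obtain ⟨a, haA, haL⟩ := Finset.not_subset.mp hAL
        have hssub : L ⊂ L ∪ A :=
          Finset.ssubset_iff_of_subset Finset.subset_union_left |>.mpr
            ⟨a, Finset.mem_union_right _ haA, haL⟩
        have hnss : ¬ (L ∪ A ⊂ I) := fun hss =>
          hcov.2 ⟨L ∪ A, hint, hLne.mono Finset.subset_union_left, hssub, hss⟩
        have hEq : L ∪ A = I := by
          rcases eq_or_ne (L ∪ A) I with heq | hne'
          · exact heq
          · exact absurd (Finset.ssubset_iff_subset_ne.mpr ⟨hub, hne'⟩) hnss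
        refine Or.inr (fun b hb => ?_)
        have hbI : b ∈ I := hBI hb
        rw [← hEq] at hbI
        rcases Finset.mem_union.mp hbI with h | h
        · exact h
        · exact absurd hb (Finset.disjoint_left.mp hdisj h)
    · -- L ⊆ B
      have hLB : L ⊆ B := by
        intro x hx
        have hxI : x ∈ I := hLI hx
        rw [← hunion] at hxI
        rcases Finset.mem_union.mp hxI with h | h
        · exact absurd ⟨x, hx, h⟩ hLA
        · exact h
      have hBI' : B ⊂ I := by
        obtain ⟨a0, ha0⟩ := hAne
        refine Finset.ssubset_iff_of_subset hBI |>.mpr ⟨a0, hAI ha0, ?_⟩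
        exact Finset.disjoint_left.mp hdisj ha0
      rcases eq_or_ne L B with heq | hne'
      · exact Or.inr (heq ▸ Finset.Subset.refl _)
      · exact absurd ⟨B, hBint, hBne, Finset.ssubset_iff_subset_ne.mpr ⟨hLB, hne'⟩, hBI'⟩ hcov.2
  have hnotboth : ∀ L, IntervalCover π I L → ¬(A ⊆ L ∧ B ⊆ L) := by
    rintro L hcov ⟨h1, h2⟩
    exact hcov.1.2 (hunion ▸ Finset.union_subset h1 h2)
  -- order between A and B
  obtain ⟨a0, ha0⟩ := hAne
  obtain ⟨b0, hb0⟩ := hBne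
  have hne0 : a0 ≠ b0 := fun h => (Finset.disjoint_left.mp hdisj ha0) (h ▸ hb0)
  have horder : (∀ a ∈ A, ∀ b ∈ B, a < b) ∨ (∀ b ∈ B, ∀ a ∈ A, b < a) := by
    rcases lt_or_gt_of_ne hne0 with h | h
    · exact Or.inl (consec_disjoint_order hAint.1 hBint.1 hdisj ha0 hb0 h)
    · exact Or.inr (consec_disjoint_order hBint.1 hAint.1 hdisj.symm hb0 ha0 h)
  -- uniqueness per slot
  have huniqA : ∀ L1 L2, IsInterval π L1 → IsInterval π L2 → L1.Nonempty → L2.Nonempty →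
      IntervalCover π I L1 → IntervalCover π I L2 → A ⊆ L1 → A ⊆ L2 → L1 = L2 := by
    intro L1 L2 hL1 hL2 hne1 hne2 hx1 hx2 hs1 hs2
    rcases horder with hord | hord
    · exact slot_low hL1 hL2 hne1 hne2 hx1 hx2 hord ⟨a0, ha0⟩ hs1 hs2 hunion.symm
    · exact slot_high hL1 hL2 hne1 hne2 hx1 hx2 hord ⟨a0, ha0⟩ hs1 hs2 hunion.symm
  have huniqB : ∀ L1 L2, IsInterval π L1 → IsInterval π L2 → L1.Nonempty → L2.Nonempty →
      IntervalCover π I L1 → IntervalCover π I L2 → B ⊆ L1 → B ⊆ L2 → L1 = L2 := by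
    intro L1 L2 hL1 hL2 hne1 hne2 hx1 hx2 hs1 hs2
    have hunion' : I = B ∪ A := by rw [Finset.union_comm]; exact hunion.symm
    rcases horder with hord | hord
    · exact slot_high hL1 hL2 hne1 hne2 hx1 hx2 hord ⟨b0, hb0⟩ hs1 hs2 hunion'
    · exact slot_low hL1 hL2 hne1 hne2 hx1 hx2 hord ⟨b0, hb0⟩ hs1 hs2 hunion'
  -- pigeonhole
  rcases hslot J1 hJ1 hJ1ne hc1 with hs1 | hs1 <;>
    rcases hslot J2 hJ2 hJ2ne hc2 with hs2 | hs2 <;>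
      rcases hslot J3 hJ3 hJ3ne hc3 with hs3 | hs3
  · exact h12 (huniqA J1 J2 hJ1 hJ2 hJ1ne hJ2ne hc1 hc2 hs1 hs2)
  · exact h12 (huniqA J1 J2 hJ1 hJ2 hJ1ne hJ2ne hc1 hc2 hs1 hs2)
  · exact h13 (huniqA J1 J3 hJ1 hJ3 hJ1ne hJ3ne hc1 hc3 hs1 hs3)
  · exact h23 (huniqB J2 J3 hJ2 hJ3 hJ2ne hJ3ne hc2 hc3 hs2 hs3)
  · exact h23 (huniqA J2 J3 hJ2 hJ3 hJ2ne hJ3ne hc2 hc3 hs2 hs3)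
  · exact h13 (huniqB J1 J3 hJ1 hJ3 hJ1ne hJ3ne hc1 hc3 hs1 hs3)
  · exact h12 (huniqB J1 J2 hJ1 hJ2 hJ1ne hJ2ne hc1 hc2 hs1 hs2)
  · exact h12 (huniqB J1 J2 hJ1 hJ2 hJ1ne hJ2ne hc1 hc2 hs1 hs2)

end Forward


section Backward

variable {n : ℕ} {π : Equiv.Perm (Fin n)}

lemma interval_pos_between {K : Finset (Fin n)} (hK : IsInterval π K) {x z : Fin n}
    (hx : π x ∈ K) (hz : π z ∈ K) (y : Fin n) (hxy : x ≤ y) (hyz : y ≤ z) : π y ∈ K := by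
  have hx' : x ∈ K.image π.symm := Finset.mem_image.mpr ⟨π x, hx, by simp⟩
  have hz' : z ∈ K.image π.symm := Finset.mem_image.mpr ⟨π z, hz, by simp⟩
  have hy' := hK.2 hx' hz' hxy hyz
  obtain ⟨v, hv, hvy⟩ := Finset.mem_image.mp hy'
  have : π y = v := by rw [← hvy]; simp
  exact this ▸ hv

lemma exists_child (π : Equiv.Perm (Fin n)) {I J : Finset (Fin n)}
    (hJ : IsInterval π J) (hJne : J.Nonempty) (hJI : J ⊂ I) :
    ∃ C, IsInterval π C ∧ C.Nonempty ∧ J ⊆ C ∧ IntervalCover π I C := by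
  classical
  set F : Finset (Finset (Fin n)) :=
    Finset.univ.filter (fun K => IsInterval π K ∧ J ⊆ K ∧ K ⊂ I) with hF
  have hJF : J ∈ F := by
    simp only [hF, Finset.mem_filter, Finset.mem_univ, true_and]
    exact ⟨hJ, Finset.Subset.refl _, hJI⟩
  obtain ⟨C, hCF, hmax⟩ := F.exists_max_image Finset.card ⟨J, hJF⟩
  simp only [hF, Finset.mem_filter, Finset.mem_univ, true_and] at hCF
  obtain ⟨hCint, hJC, hCI⟩ := hCF
  refine ⟨C, hCint, hJne.mono hJC, hJC, hCI, ?_⟩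
  rintro ⟨K, hKint, hKne, hCK, hKI⟩
  have hKF : K ∈ F := by
    simp only [hF, Finset.mem_filter, Finset.mem_univ, true_and]
    exact ⟨hKint, hJC.trans hCK.subset, hKI⟩
  have := hmax K hKF
  have := Finset.card_lt_card hCK
  omega

theorem backward_direction (h : Contains2413 π ∨ Contains3142 π) :
    ∃ I : Finset (Fin n), IsInterval π I ∧ I.Nonempty ∧
      ∃ J₁ J₂ J₃ : Finset (Fin n), J₁ ≠ J₂ ∧ J₁ ≠ J₃ ∧ J₂ ≠ J₃ ∧
        (IsInterval π J₁ ∧ J₁.Nonempty ∧ IntervalCover π I J₁) ∧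
        (IsInterval π J₂ ∧ J₂.Nonempty ∧ IntervalCover π I J₂) ∧
        (IsInterval π J₃ ∧ J₃.Nonempty ∧ IntervalCover π I J₃) := by
  classical
  -- extract the four points
  obtain ⟨a, b, c, d, hab, hbc, hcd, hv⟩ :
      ∃ a b c d : Fin n, a < b ∧ b < c ∧ c < d ∧
        ((π c < π a ∧ π a < π d ∧ π d < π b) ∨ (π b < π d ∧ π d < π a ∧ π a < π c)) := by
    rcases h with ⟨a, b, c, d, h1, h2, h3, h4, h5, h6⟩ | ⟨a, b, c, d, h1, h2, h3, h4, h5, h6⟩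
    · exact ⟨a, b, c, d, h1, h2, h3, Or.inl ⟨h4, h5, h6⟩⟩
    · exact ⟨a, b, c, d, h1, h2, h3, Or.inr ⟨h4, h5, h6⟩⟩
  -- closure: any interval containing two of {πa,πb,πc} contains all four points
  have pair_ab : ∀ K, IsInterval π K → π a ∈ K → π b ∈ K →
      π c ∈ K ∧ π d ∈ K := by
    intro K hK ha hb
    rcases hv with ⟨h4, h5, h6⟩ | ⟨h4, h5, h6⟩
    · have hd : π d ∈ K := hK.1 ha hb h5.le h6.le
      exact ⟨interval_pos_between hK ha hd c (hab.trans hbc).le hcd.le, hd⟩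
    · have hd : π d ∈ K := hK.1 hb ha h4.le h5.le
      have hc : π c ∈ K := interval_pos_between hK ha hd c (le_of_lt (lt_trans hab hbc)) hcd.le
      exact ⟨hc, hd⟩
  have pair_ac : ∀ K, IsInterval π K → π a ∈ K → π c ∈ K →
      π b ∈ K ∧ π d ∈ K := by
    intro K hK ha hc
    have hb : π b ∈ K := interval_pos_between hK ha hc b hab.le hbc.le
    exact ⟨hb, (pair_ab K hK ha hb).2⟩
  have pair_bc : ∀ K, IsInterval π K → π b ∈ K → π c ∈ K →
      π a ∈ K ∧ π d ∈ K := by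
    intro K hK hb hc
    have ha : π a ∈ K := by
      rcases hv with ⟨h4, h5, h6⟩ | ⟨h4, h5, h6⟩
      · exact hK.1 hc hb h4.le (h5.trans h6).le
      · exact hK.1 hb hc (h4.trans h5).le h6.le
    exact ⟨ha, (pair_ab K hK ha hb).2⟩
  -- the interval hull of the four points
  set I : Finset (Fin n) := Finset.univ.filter
    (fun v => ∀ K, IsInterval π K → π a ∈ K → π b ∈ K → π c ∈ K → π d ∈ K → v ∈ K) with hIdef
  have hmemI : ∀ v : Fin n, v ∈ I ↔
      (∀ K, IsInterval π K → π a ∈ K → π b ∈ K → π c ∈ K → π d ∈ K → v ∈ K) := by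
    intro v
    simp only [hIdef, Finset.mem_filter, Finset.mem_univ, true_and]
  have haI : π a ∈ I := (hmemI _).mpr (fun K _ h _ _ _ => h)
  have hbI : π b ∈ I := (hmemI _).mpr (fun K _ _ h _ _ => h)
  have hcI : π c ∈ I := (hmemI _).mpr (fun K _ _ _ h _ => h)
  have hdI : π d ∈ I := (hmemI _).mpr (fun K _ _ _ _ h => h)
  have hImin : ∀ K, IsInterval π K → π a ∈ K → π b ∈ K → π c ∈ K → π d ∈ K → I ⊆ K :=
    fun K hK h1 h2 h3 h4 v hv => (hmemI v).mp hv K hK h1 h2 h3 h4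
  have hIint : IsInterval π I := by
    constructor
    · intro x y z hx hz hxy hyz
      rw [hmemI]
      intro K hK h1 h2 h3 h4
      exact hK.1 ((hmemI x).mp hx K hK h1 h2 h3 h4) ((hmemI z).mp hz K hK h1 h2 h3 h4) hxy hyz
    · intro x y z hx hz hxy hyz
      obtain ⟨u, hu, hux⟩ := Finset.mem_image.mp hx
      obtain ⟨w, hw, hwz⟩ := Finset.mem_image.mp hz
      have hpx : π x = u := by rw [← hux]; simp
      have hpz : π z = w := by rw [← hwz]; simp
      have hyI : π y ∈ I := by
        rw [hmemI]
        intro K hK h1 h2 h3 h4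
        have hxK : π x ∈ K := hpx ▸ ((hmemI u).mp hu K hK h1 h2 h3 h4)
        have hzK : π z ∈ K := hpz ▸ ((hmemI w).mp hw K hK h1 h2 h3 h4)
        exact interval_pos_between hK hxK hzK y hxy hyz
      exact Finset.mem_image.mpr ⟨π y, hyI, by simp⟩
  have hIne : I.Nonempty := ⟨π a, haI⟩
  -- singletons are proper subsets of I
  have habne : a ≠ b := hab.ne
  have hsingle : ∀ x y : Fin n, x ≠ y → π y ∈ I → ({π x} : Finset (Fin n)) ⊂ I → True := fun _ _ _ _ _ => trivial
  have hprop : ∀ x : Fin n, π x ∈ I → (∃ y : Fin n, y ≠ x ∧ π y ∈ I) →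
      ({π x} : Finset (Fin n)) ⊂ I := by
    intro x hx ⟨y, hyx, hy⟩
    refine (Finset.ssubset_iff_of_subset (Finset.singleton_subset_iff.mpr hx)).mpr
      ⟨π y, hy, ?_⟩
    simp only [Finset.mem_singleton]
    exact fun h => hyx (π.injective h)
  have hsA : ({π a} : Finset (Fin n)) ⊂ I := hprop a haI ⟨d, (hcd.trans' (hbc.trans' hab)).ne', hdI⟩
  have hsB : ({π b} : Finset (Fin n)) ⊂ I := hprop b hbI ⟨d, (hcd.trans' hbc).ne', hdI⟩
  have hsC : ({π c} : Finset (Fin n)) ⊂ I := hprop c hcI ⟨d, hcd.ne', hdI⟩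
  obtain ⟨C1, hC1int, hC1ne, hsub1, hcov1⟩ :=
    exists_child π (isInterval_singleton π (π a)) ⟨π a, Finset.mem_singleton_self _⟩ hsA
  obtain ⟨C2, hC2int, hC2ne, hsub2, hcov2⟩ :=
    exists_child π (isInterval_singleton π (π b)) ⟨π b, Finset.mem_singleton_self _⟩ hsB
  obtain ⟨C3, hC3int, hC3ne, hsub3, hcov3⟩ :=
    exists_child π (isInterval_singleton π (π c)) ⟨π c, Finset.mem_singleton_self _⟩ hsC
  have haC1 : π a ∈ C1 := hsub1 (Finset.mem_singleton_self _)
  have hbC2 : π b ∈ C2 := hsub2 (Finset.mem_singleton_self _)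
  have hcC3 : π c ∈ C3 := hsub3 (Finset.mem_singleton_self _)
  have hfull : ∀ C, IsInterval π C → IntervalCover π I C → π a ∈ C → π b ∈ C → π c ∈ C → π d ∈ C → False := by
    intro C hC hcov h1 h2 h3 h4
    exact hcov.1.2 (hImin C hC h1 h2 h3 h4)
  have h12 : C1 ≠ C2 := by
    intro h
    obtain ⟨h3', h4'⟩ := pair_ab C1 hC1int haC1 (h ▸ hbC2)
    exact hfull C1 hC1int hcov1 haC1 (h ▸ hbC2) h3' h4'
  have h13 : C1 ≠ C3 := by
    intro h
    obtain ⟨h2', h4'⟩ := pair_ac C1 hC1int haC1 (h ▸ hcC3)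
    exact hfull C1 hC1int hcov1 haC1 h2' (h ▸ hcC3) h4'
  have h23 : C2 ≠ C3 := by
    intro h
    obtain ⟨h1', h4'⟩ := pair_bc C2 hC2int hbC2 (h ▸ hcC3)
    exact hfull C2 hC2int hcov2 h1' hbC2 (h ▸ hcC3) h4'
  exact ⟨I, hIint, hIne, C1, C2, C3, h12, h13, h23,
    ⟨hC1int, hC1ne, hcov1⟩, ⟨hC2int, hC2ne, hcov2⟩, ⟨hC3int, hC3ne, hcov3⟩⟩

end Backward

/-- π is separable (avoids 2413 and 3142) if and only if its interval
poset is binary, i.e. no element covers three pairwise distinct elements. -/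
theorem separable_iff_binary (n : ℕ) (π : Equiv.Perm (Fin n)) :
    (¬ Contains2413 π ∧ ¬ Contains3142 π) ↔
      ∀ I : Finset (Fin n), IsInterval π I → I.Nonempty →
        ¬ ∃ J₁ J₂ J₃ : Finset (Fin n), J₁ ≠ J₂ ∧ J₁ ≠ J₃ ∧ J₂ ≠ J₃ ∧
          (IsInterval π J₁ ∧ J₁.Nonempty ∧ IntervalCover π I J₁) ∧
          (IsInterval π J₂ ∧ J₂.Nonempty ∧ IntervalCover π I J₂) ∧
          (IsInterval π J₃ ∧ J₃.Nonempty ∧ IntervalCover π I J₃) := by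
  constructor
  · rintro ⟨h24, h31⟩
    exact forward_direction h24 h31
  · intro hRHS
    constructor
    · intro h24
      obtain ⟨I, hI, hIne, rest⟩ := backward_direction (Or.inl h24)
      exact hRHS I hI hIne rest
    · intro h31
      obtain ⟨I, hI, hIne, rest⟩ := backward_direction (Or.inr h31)
      exact hRHS I hI hIne rest
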